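/- arXiv:1708.02130 — 2 statements merged into one kernel-verified Lean document; each statement's English description precedes it below -/
import Mathlib

section
/- In the scheme DualHE, homomorphic NAND evaluation preserves the ciphertext form: if C_b = A'S_b + E_b + μ_b G (mod q) for b ∈ {0,1} with μ_b ∈ {0,1}, then G − C_0 · G^{−1}(C_1) = A'S' + E' + (1 − μ_0 μ_1) G where S' = −S_0 · G^{−1}(C_1) − μ_0 S_1 and E' = −E_0 · G^{−1}(C_1) − μ_0 E_1. Moreover, if ‖E_0‖_∞ ≤ β and ‖E_1‖_∞ ≤ β then ‖E'‖_∞ ≤ β(N+1). -/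
open Matrix

/-- The representative of `x : ZMod q` in `(−q/2, q/2]`. -/
def zrep (q : ℕ) [NeZero q] (x : ZMod q) : ℤ :=
  if 2 * (x.val : ℤ) ≤ (q : ℤ) then (x.val : ℤ) else (x.val : ℤ) - q

/-- The absolute value `|x|` of the representative of `x : ZMod q` in `(−q/2, q/2]`. -/
def zqabs (q : ℕ) [NeZero q] (x : ZMod q) : ℤ := |zrep q x|

lemma zrep_cast (q : ℕ) [NeZero q] (x : ZMod q) : ((zrep q x : ℤ) : ZMod q) = x := by
  unfold zrep
  split_ifs <;> push_cast <;> simp [ZMod.natCast_val, ZMod.natCast_self]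

lemma zqabs_nonneg (q : ℕ) [NeZero q] (x : ZMod q) : 0 ≤ zqabs q x := abs_nonneg _

lemma zqabs_zero (q : ℕ) [NeZero q] : zqabs q (0 : ZMod q) = 0 := by
  simp [zqabs, zrep, ZMod.val_zero]

lemma zqabs_le (q : ℕ) [NeZero q] (x : ZMod q) (a : ℤ) (h : (a : ZMod q) = x) :
    zqabs q x ≤ |a| := by
  have hq : 0 < (q : ℤ) := by exact_mod_cast Nat.pos_of_ne_zero (NeZero.ne q)
  have hv0 : 0 ≤ ((x.val : ℤ)) := Int.natCast_nonneg _
  have hvq : ((x.val : ℤ)) < q := by exact_mod_cast ZMod.val_lt x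
  have hdvd : (q : ℤ) ∣ (a - (x.val : ℤ)) := by
    rw [← ZMod.intCast_zmod_eq_zero_iff_dvd]
    push_cast
    rw [h]
    simp [ZMod.natCast_val]
  obtain ⟨k, hk⟩ := hdvd
  have hcases : (q : ℤ) * k = 0 ∨ (q : ℤ) ≤ q * k ∨ (q : ℤ) * k ≤ -q := by
    rcases lt_trichotomy k 0 with hlt | heq | hgt
    · right; right; nlinarith
    · left; simp [heq]
    · right; left; nlinarith
  unfold zqabs zrep
  rcases abs_cases a with ⟨h1, _⟩ | ⟨h1, _⟩ <;>
    split_ifs with h2 <;>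
    rcases abs_cases ((x.val : ℤ)) with ⟨h3, _⟩ | ⟨h3, _⟩ <;>
    rcases abs_cases ((x.val : ℤ) - q) with ⟨h4, _⟩ | ⟨h4, _⟩ <;>
    omega

lemma zqabs_add_le (q : ℕ) [NeZero q] (x y : ZMod q) :
    zqabs q (x + y) ≤ zqabs q x + zqabs q y := by
  calc zqabs q (x + y) ≤ |zrep q x + zrep q y| := by
        apply zqabs_le
        push_cast [zrep_cast]
        rfl
    _ ≤ |zrep q x| + |zrep q y| := abs_add_le _ _
    _ = zqabs q x + zqabs q y := rfl

lemma zqabs_neg_le (q : ℕ) [NeZero q] (x : ZMod q) : zqabs q (-x) ≤ zqabs q x := by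
  have := zqabs_le q (-x) (-(zrep q x)) (by push_cast [zrep_cast]; rfl)
  rw [abs_neg] at this; exact this

lemma zqabs_mul_bit (q : ℕ) [NeZero q] (x b : ZMod q) (hb : b = 0 ∨ b = 1) :
    zqabs q (x * b) ≤ zqabs q x := by
  rcases hb with hb | hb <;> simp [hb, zqabs_zero, zqabs_nonneg]

lemma zqabs_bit_mul (q : ℕ) [NeZero q] (x b : ZMod q) (hb : b = 0 ∨ b = 1) :
    zqabs q (b * x) ≤ zqabs q x := by
  rw [mul_comm]; exact zqabs_mul_bit q x b hb

lemma zqabs_sum_le (q : ℕ) [NeZero q] {ι : Type*} (s : Finset ι) (f : ι → ZMod q) :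
    zqabs q (∑ i ∈ s, f i) ≤ ∑ i ∈ s, zqabs q (f i) := by
  classical
  induction s using Finset.induction_on with
  | empty => simp [zqabs_zero]
  | insert _ _ hx ih =>
    rw [Finset.sum_insert hx, Finset.sum_insert hx]
    exact (zqabs_add_le q _ _).trans (by linarith)

/-- DualHE homomorphic NAND preserves the ciphertext form: if
`C_b = A'S_b + E_b + μ_b G` for bits `μ_b`, and `G⁻¹` produces binary matrices with
`G · G⁻¹(C) = C`, then `G − C₀ · G⁻¹(C₁) = A'S' + E' + (1 − μ₀μ₁)G` with
`S' = −S₀·G⁻¹(C₁) − μ₀S₁` and `E' = −E₀·G⁻¹(C₁) − μ₀E₁`; moreover if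
`‖E₀‖_∞ ≤ β` and `‖E₁‖_∞ ≤ β` then `‖E'‖_∞ ≤ β(N+1)`. -/
theorem dualHE_nand_ciphertext_form (q n m N : ℕ) [NeZero q]
    (A' : Matrix (Fin (m + 1)) (Fin n) (ZMod q))
    (S0 S1 : Matrix (Fin n) (Fin N) (ZMod q))
    (E0 E1 G : Matrix (Fin (m + 1)) (Fin N) (ZMod q))
    (Ginv : Matrix (Fin (m + 1)) (Fin N) (ZMod q) → Matrix (Fin N) (Fin N) (ZMod q))
    (hGinv : ∀ C, G * Ginv C = C)
    (hbin : ∀ C i j, Ginv C i j = 0 ∨ Ginv C i j = 1)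
    (μ0 μ1 : ZMod q) (hμ0 : μ0 = 0 ∨ μ0 = 1) (hμ1 : μ1 = 0 ∨ μ1 = 1)
    (C0 C1 : Matrix (Fin (m + 1)) (Fin N) (ZMod q))
    (hC0 : C0 = A' * S0 + E0 + μ0 • G)
    (hC1 : C1 = A' * S1 + E1 + μ1 • G)
    (β : ℝ) (hE0 : ∀ i j, (zqabs q (E0 i j) : ℝ) ≤ β)
    (hE1 : ∀ i j, (zqabs q (E1 i j) : ℝ) ≤ β) :
    G - C0 * Ginv C1 =
        A' * (-(S0 * Ginv C1) - μ0 • S1) + (-(E0 * Ginv C1) - μ0 • E1) +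
          (1 - μ0 * μ1) • G
      ∧ ∀ i j, (zqabs q ((-(E0 * Ginv C1) - μ0 • E1) i j) : ℝ) ≤ β * (N + 1) := by
  constructor
  · have key : C0 * Ginv C1 = A' * (S0 * Ginv C1) + E0 * Ginv C1 + μ0 • C1 := by
      rw [hC0, Matrix.add_mul, Matrix.add_mul, Matrix.smul_mul, hGinv, Matrix.mul_assoc]
    rw [key, hC1]
    rw [Matrix.mul_sub, Matrix.mul_neg, Matrix.mul_smul]
    simp only [smul_add, smul_smul, sub_smul, one_smul]
    abel
  · intro i j
    set X := Ginv C1 with hX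
    have hentry : (-(E0 * X) - μ0 • E1) i j = (∑ k, -(E0 i k * X k j)) + (-(μ0 * E1 i j)) := by
      simp [Matrix.mul_apply, sub_eq_add_neg, Matrix.add_apply, Matrix.neg_apply,
        Matrix.smul_apply, smul_eq_mul, Finset.sum_neg_distrib]
    have h1 : zqabs q ((-(E0 * X) - μ0 • E1) i j) ≤
        (∑ k, zqabs q (E0 i k * X k j)) + zqabs q (μ0 * E1 i j) := by
      rw [hentry]
      refine (zqabs_add_le q _ _).trans (add_le_add ?_ (zqabs_neg_le q _))
      refine (zqabs_sum_le q _ _).trans ?_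
      exact Finset.sum_le_sum fun k _ => zqabs_neg_le q _
    have h2 : ((∑ k, zqabs q (E0 i k * X k j) : ℤ) : ℝ) ≤ N * β := by
      push_cast
      calc (∑ k, (zqabs q (E0 i k * X k j) : ℝ)) ≤ ∑ _k : Fin N, β := by
            refine Finset.sum_le_sum fun k _ => ?_
            have := zqabs_mul_bit q (E0 i k) (X k j) (hbin C1 k j)
            calc ((zqabs q (E0 i k * X k j) : ℤ) : ℝ) ≤ (zqabs q (E0 i k) : ℝ) := by
                  exact_mod_cast this
              _ ≤ β := hE0 i k
        _ = N * β := by simp [mul_comm]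
    have h3 : ((zqabs q (μ0 * E1 i j) : ℤ) : ℝ) ≤ β := by
      have := zqabs_bit_mul q (E1 i j) μ0 hμ0
      calc ((zqabs q (μ0 * E1 i j) : ℤ) : ℝ) ≤ (zqabs q (E1 i j) : ℝ) := by exact_mod_cast this
        _ ≤ β := hE1 i j
    have h1' : ((zqabs q ((-(E0 * X) - μ0 • E1) i j) : ℤ) : ℝ) ≤
        ((∑ k, zqabs q (E0 i k * X k j) : ℤ) : ℝ) + ((zqabs q (μ0 * E1 i j) : ℤ) : ℝ) := by
      push_cast
      exact_mod_cast h1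
    calc ((zqabs q ((-(E0 * X) - μ0 • E1) i j) : ℤ) : ℝ) ≤ N * β + β := by
          linarith
      _ = β * (N + 1) := by ring
end

section
/- Iterating the NAND noise-growth bound: if all fresh ciphertexts in DualHE have error matrices with ‖E‖_∞ ≤ β_init, then every ciphertext occurring after homomorphically evaluating a Boolean circuit of NAND-depth L can be written as A'S + E + μG with ‖E‖_∞ ≤ β_init·(N+1)^L. -/
open Matrix

/-- The set of DualHE ciphertexts obtainable at NAND-depth `L`: fresh ciphertexts
`A'S + E + μG` with `‖E‖_∞ ≤ β_init` at depth `0`, closed under the homomorphic NAND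
`(C₀, C₁) ↦ G − C₀ · G⁻¹(C₁)` at each further level. -/
def dualHECtxts (q n m N : ℕ) [NeZero q]
    (A' : Matrix (Fin (m + 1)) (Fin n) (ZMod q))
    (G : Matrix (Fin (m + 1)) (Fin N) (ZMod q))
    (Ginv : Matrix (Fin (m + 1)) (Fin N) (ZMod q) → Matrix (Fin N) (Fin N) (ZMod q))
    (βinit : ℝ) : ℕ → Set (Matrix (Fin (m + 1)) (Fin N) (ZMod q))
  | 0 => {C | ∃ S E μ, (μ = 0 ∨ μ = 1) ∧ C = A' * S + E + μ • G ∧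
      ∀ i j, (zqabs q (E i j) : ℝ) ≤ βinit}
  | (L + 1) => dualHECtxts q n m N A' G Ginv βinit L ∪
      {C | ∃ C0 ∈ dualHECtxts q n m N A' G Ginv βinit L,
        ∃ C1 ∈ dualHECtxts q n m N A' G Ginv βinit L, C = G - C0 * Ginv C1}

lemma two_abs_zrep_le (q : ℕ) [NeZero q] (x : ZMod q) : 2 * |zrep q x| ≤ q := by
  have hv : (x.val : ℤ) < q := by exact_mod_cast ZMod.val_lt x
  have hv0 : (0:ℤ) ≤ (x.val : ℤ) := by positivity
  unfold zrep; split
  · rw [abs_of_nonneg hv0]; omega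
  · rw [abs_of_nonpos (by omega)]; omega

lemma zqabs_le_of_cast (q : ℕ) [NeZero q] (z : ℤ) (x : ZMod q) (h : (z : ZMod q) = x) :
    zqabs q x ≤ |z| := by
  have h1 : ((z - zrep q x : ℤ) : ZMod q) = 0 := by push_cast [zrep_cast, h]; ring
  have h2 : (q:ℤ) ∣ z - zrep q x := by
    exact_mod_cast (ZMod.intCast_zmod_eq_zero_iff_dvd _ q).1 h1
  have hq := two_abs_zrep_le q x
  rcases eq_or_ne z (zrep q x) with he | he
  · simp [zqabs, he]
  · have hge : (q:ℤ) ≤ |z - zrep q x| :=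
      Int.le_of_dvd (abs_pos.2 (sub_ne_zero.2 he)) ((dvd_abs _ _).2 h2)
    have htri : |z - zrep q x| ≤ |z| + |zrep q x| := abs_sub z (zrep q x)
    simp only [zqabs]
    omega

lemma nand_step (q n m N : ℕ) [NeZero q]
    (A' : Matrix (Fin (m + 1)) (Fin n) (ZMod q))
    (G : Matrix (Fin (m + 1)) (Fin N) (ZMod q))
    (Ginv : Matrix (Fin (m + 1)) (Fin N) (ZMod q) → Matrix (Fin N) (Fin N) (ZMod q))
    (hGinv : ∀ C, G * Ginv C = C)
    (hbin : ∀ C i j, Ginv C i j = 0 ∨ Ginv C i j = 1)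
    (β : ℝ)
    (C0 C1 : Matrix (Fin (m + 1)) (Fin N) (ZMod q))
    (S0 : Matrix (Fin n) (Fin N) (ZMod q)) (E0 : Matrix (Fin (m+1)) (Fin N) (ZMod q))
    (μ0 : ℕ) (hμ0 : μ0 = 0 ∨ μ0 = 1)
    (hC0 : C0 = A' * S0 + E0 + μ0 • G) (hE0 : ∀ i j, (zqabs q (E0 i j) : ℝ) ≤ β)
    (S1 : Matrix (Fin n) (Fin N) (ZMod q)) (E1 : Matrix (Fin (m+1)) (Fin N) (ZMod q))
    (μ1 : ℕ) (hμ1 : μ1 = 0 ∨ μ1 = 1)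
    (hC1 : C1 = A' * S1 + E1 + μ1 • G) (hE1 : ∀ i j, (zqabs q (E1 i j) : ℝ) ≤ β) :
    ∃ (S : Matrix (Fin n) (Fin N) (ZMod q)) (E : Matrix (Fin (m+1)) (Fin N) (ZMod q)), ∃ μ : ℕ, (μ = 0 ∨ μ = 1) ∧ G - C0 * Ginv C1 = A' * S + E + μ • G ∧
      ∀ i j, (zqabs q (E i j) : ℝ) ≤ β * (N + 1) := by
  refine ⟨(-(S0 * Ginv C1) - μ0 • S1 : Matrix (Fin n) (Fin N) (ZMod q)),
    (-(E0 * Ginv C1) - μ0 • E1 : Matrix (Fin (m+1)) (Fin N) (ZMod q)), 1 - μ0 * μ1, ?_, ?_, ?_⟩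
  · rcases hμ0 with h | h <;> rcases hμ1 with h' | h' <;> simp [h, h']
  · have hGR : G * Ginv C1 = C1 := hGinv C1
    rcases hμ0 with h | h <;> rcases hμ1 with h' | h' <;> subst h h' <;>
      rw [hC0, Matrix.add_mul, Matrix.add_mul, Matrix.smul_mul, hGR, hC1,
        Matrix.mul_assoc] <;>
      simp only [zero_smul, one_smul, smul_zero, add_zero, zero_sub, Nat.sub_self,
        Nat.mul_zero, Nat.mul_one, Nat.zero_mul, Nat.one_mul, Nat.sub_zero,
        Matrix.mul_sub, Matrix.mul_neg, Matrix.mul_add, Matrix.mul_smul,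
        Matrix.mul_zero, neg_zero] <;>
      abel
  · intro i j
    set r : Fin N → ℤ := fun k => if Ginv C1 k j = 0 then 0 else 1 with hr
    have hrc : ∀ k, ((r k : ℤ) : ZMod q) = Ginv C1 k j := by
      intro k
      rcases hbin C1 k j with h | h
      · simp [hr, h]
      · simp only [hr]; rw [h]
        split_ifs with h2
        · push_cast; exact h2.symm
        · push_cast; rfl
    have hrabs : ∀ k, |r k| ≤ 1 := by
      intro k; simp only [hr]; split_ifs <;> norm_num
    set z : ℤ := -(∑ k, zrep q (E0 i k) * r k) - (μ0 : ℤ) * zrep q (E1 i j) with hz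
    have hcast : ((z : ℤ) : ZMod q) = (-(E0 * Ginv C1) - μ0 • E1) i j := by
      simp only [hz, Matrix.sub_apply, Matrix.neg_apply, Matrix.mul_apply, Matrix.smul_apply,
        nsmul_eq_mul]
      push_cast
      rw [Finset.sum_congr rfl (fun k _ => by rw [zrep_cast, hrc k]), zrep_cast]
    have hb := zqabs_le_of_cast q z _ hcast
    have hm0abs : |(μ0 : ℤ)| ≤ 1 := by rcases hμ0 with h | h <;> simp [h]
    have habs : (|z| : ℝ) ≤ β * (N + 1) := by
      have h1 : |z| ≤ (∑ k, |zrep q (E0 i k) * r k|) + |(μ0 : ℤ) * zrep q (E1 i j)| := by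
        calc |z| = |(∑ k, zrep q (E0 i k) * r k) + (μ0 : ℤ) * zrep q (E1 i j)| := by
              rw [hz, show -(∑ k, zrep q (E0 i k) * r k) - (μ0 : ℤ) * zrep q (E1 i j)
                = -((∑ k, zrep q (E0 i k) * r k) + (μ0 : ℤ) * zrep q (E1 i j)) by ring, abs_neg]
          _ ≤ |∑ k, zrep q (E0 i k) * r k| + |(μ0 : ℤ) * zrep q (E1 i j)| := abs_add_le _ _
          _ ≤ _ := by gcongr; exact Finset.abs_sum_le_sum_abs _ _
      have h2 : ((∑ k, |zrep q (E0 i k) * r k| : ℤ) : ℝ) ≤ N * β := by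
        push_cast
        calc (∑ k, |(zrep q (E0 i k) : ℝ) * (r k : ℝ)|) ≤ ∑ _k : Fin N, β := by
              apply Finset.sum_le_sum; intro k _
              rw [abs_mul]
              calc |(zrep q (E0 i k) : ℝ)| * |(r k : ℝ)| ≤ |(zrep q (E0 i k) : ℝ)| * 1 := by
                    gcongr
                    exact_mod_cast hrabs k
                _ = ((zqabs q (E0 i k) : ℤ) : ℝ) := by rw [mul_one]; simp [zqabs]
                _ ≤ β := hE0 i k
          _ = N * β := by simp [mul_comm]
      have h3 : ((|(μ0 : ℤ) * zrep q (E1 i j)| : ℤ) : ℝ) ≤ β := by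
        push_cast
        rw [abs_mul]
        calc |(μ0 : ℝ)| * |(zrep q (E1 i j) : ℝ)| ≤ 1 * |(zrep q (E1 i j) : ℝ)| := by
              gcongr
              exact_mod_cast hm0abs
          _ = ((zqabs q (E1 i j) : ℤ) : ℝ) := by rw [one_mul]; simp [zqabs]
          _ ≤ β := hE1 i j
      have h1' : (|z| : ℝ) ≤ ((∑ k, |zrep q (E0 i k) * r k| : ℤ) : ℝ)
          + ((|(μ0 : ℤ) * zrep q (E1 i j)| : ℤ) : ℝ) := by exact_mod_cast h1
      nlinarith
    calc ((zqabs q ((-(E0 * Ginv C1) - μ0 • E1) i j) : ℤ) : ℝ) ≤ |(z : ℝ)| := by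
          exact_mod_cast hb
      _ ≤ β * (N + 1) := habs

/-- Iterated noise growth in DualHE: every ciphertext arising from a depth-`L` NAND
circuit applied to fresh ciphertexts (noise bound `β_init`) has the form `A'S + E + μG`
with `μ ∈ {0,1}` and `‖E‖_∞ ≤ β_init (N+1)^L`. -/
theorem dualHE_depth_noise_bound (q n m N : ℕ) [NeZero q]
    (A' : Matrix (Fin (m + 1)) (Fin n) (ZMod q))
    (G : Matrix (Fin (m + 1)) (Fin N) (ZMod q))
    (Ginv : Matrix (Fin (m + 1)) (Fin N) (ZMod q) → Matrix (Fin N) (Fin N) (ZMod q))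
    (hGinv : ∀ C, G * Ginv C = C)
    (hbin : ∀ C i j, Ginv C i j = 0 ∨ Ginv C i j = 1)
    (βinit : ℝ) (hβ : 0 ≤ βinit) (L : ℕ)
    (C : Matrix (Fin (m + 1)) (Fin N) (ZMod q))
    (hC : C ∈ dualHECtxts q n m N A' G Ginv βinit L) :
    ∃ S E μ, (μ = 0 ∨ μ = 1) ∧ C = A' * S + E + μ • G ∧
      ∀ i j, (zqabs q (E i j) : ℝ) ≤ βinit * (N + 1) ^ L := by
  induction L generalizing C with
  | zero =>
    obtain ⟨S, E, μ, hμ, hCE, hb⟩ := hC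
    exact ⟨S, E, μ, hμ, hCE, fun i j => by simpa using hb i j⟩
  | succ L ih =>
    have hpow : (0:ℝ) ≤ βinit * (N + 1) ^ L := by positivity
    rcases hC with h | ⟨C0, h0, C1, h1, rfl⟩
    · obtain ⟨S, E, μ, hμ, hCE, hb⟩ := ih C h
      refine ⟨S, E, μ, hμ, hCE, fun i j => (hb i j).trans ?_⟩
      rw [pow_succ]
      nlinarith [Nat.cast_nonneg (α := ℝ) N]
    · obtain ⟨S0, E0, μ0, hμ0, hC0, hE0⟩ := ih C0 h0
      obtain ⟨S1, E1, μ1, hμ1, hC1, hE1⟩ := ih C1 h1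
      obtain ⟨S, E, μ, hμ, hCE, hb⟩ := nand_step q n m N A' G Ginv hGinv hbin
        (βinit * (N + 1) ^ L) C0 C1 S0 E0 μ0 hμ0 hC0 hE0 S1 E1 μ1 hμ1 hC1 hE1
      exact ⟨S, E, μ, hμ, hCE, fun i j => (hb i j).trans_eq (by rw [pow_succ]; ring)⟩
end
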